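/- Let λ be a regular cardinal and μ a cardinal with the property that a family P ⊆ [μ]^θ (for some regular θ < λ) of size μ satisfies: for every A ∈ [μ]^θ there is C ∈ P with |A ∩ C| = θ. If there is a <_cl-dominating family of increasing functions in λ^λ of size μ indexed by μ, then d(λ) ≤ μ, i.e., there is a <*-dominating family of size μ (namely the pointwise suprema h_A(γ) = sup_{α∈A} h_α(γ) for A ∈ P). -/

import Mathlib

open Cardinal

/-- Eventual domination: `f <* g` iff `f β < g β` for all sufficiently large `β`. -/
def almostLt {T : Type*} [LinearOrder T] (f g : T → T) : Prop :=
  ∃ γ : T, ∀ β : T, γ < β → f β < g β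

/-- `C` is a club: unbounded, and closed under limits (every limit point belongs to `C`). -/
def IsClubIn {T : Type*} [LinearOrder T] (C : Set T) : Prop :=
  (∀ x : T, ∃ y ∈ C, x < y) ∧
  ∀ x : T, (∃ y : T, y < x) → (∀ y : T, y < x → ∃ z ∈ C, y < z ∧ z < x) → x ∈ C

/-- Club domination: `f <_cl g` iff `f < g` pointwise on some club. -/
def clubLt {T : Type*} [LinearOrder T] (f g : T → T) : Prop :=
  ∃ C : Set T, IsClubIn C ∧ ∀ α ∈ C, f α < g α

/-- The bounding number of `(T → T, r)`: the least size of a family with no single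
`r`-upper bound. -/
noncomputable def bFun (T : Type*) [LinearOrder T] (r : (T → T) → (T → T) → Prop) : Cardinal :=
  sInf {c : Cardinal | ∃ U : Set (T → T), (∀ g : T → T, ∃ f ∈ U, ¬ r f g) ∧ #U = c}

/-- The dominating number of `(T → T, r)`: the least size of an `r`-dominating family. -/
noncomputable def dFun (T : Type*) [LinearOrder T] (r : (T → T) → (T → T) → Prop) : Cardinal :=
  sInf {c : Cardinal | ∃ D : Set (T → T), (∀ f : T → T, ∃ g ∈ D, r f g) ∧ #D = c}

open Set Ordinal

namespace ClubAux

universe u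

section Generic
variable {T : Type u} [LinearOrder T] [WellFoundedLT T] [Nonempty T]

open Classical in
noncomputable def least (S : Set T) : T :=
  if h : S.Nonempty then (IsWellFounded.wf (r := ((· < ·) : T → T → Prop))).min S h
  else Classical.arbitrary T

lemma least_mem {S : Set T} (h : S.Nonempty) : least S ∈ S := by
  rw [least, dif_pos h]
  exact WellFounded.min_mem _ S h

lemma least_le {S : Set T} {x : T} (hx : x ∈ S) : least S ≤ x := by
  rw [least, dif_pos ⟨x, hx⟩]
  exact not_lt.mp (WellFounded.not_lt_min _ S hx)

noncomputable def lub (S : Set T) : T := least (upperBounds S)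

lemma le_lub {S : Set T} (hb : (upperBounds S).Nonempty) {x : T} (hx : x ∈ S) : x ≤ lub S :=
  least_mem hb hx

lemma lub_le {S : Set T} {b : T} (hb : b ∈ upperBounds S) : lub S ≤ b := least_le hb

noncomputable def slub (S : Set T) : T := least {b | ∀ x ∈ S, x < b}

lemma lt_slub {S : Set T} (hb : ∃ b, ∀ x ∈ S, x < b) {x : T} (hx : x ∈ S) : x < slub S := by
  obtain ⟨b, hb⟩ := hb
  have := least_mem (S := {b | ∀ x ∈ S, x < b}) ⟨b, hb⟩
  exact this x hx

lemma slub_le {S : Set T} {b : T} (hb : ∀ x ∈ S, x < b) : slub S ≤ b := least_le hb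

noncomputable def nxt (C : Set T) (γ : T) : T := least {z | z ∈ C ∧ γ < z}

lemma nxt_spec {C : Set T} (hC : ∀ x : T, ∃ y ∈ C, x < y) (γ : T) :
    nxt C γ ∈ C ∧ γ < nxt C γ := by
  obtain ⟨y, hy, hγ⟩ := hC γ
  have : ({z | z ∈ C ∧ γ < z} : Set T).Nonempty := ⟨y, hy, hγ⟩
  exact least_mem this

lemma nxt_le {C : Set T} {z γ : T} (hz : z ∈ C) (hγ : γ < z) : nxt C γ ≤ z :=
  least_le ⟨hz, hγ⟩

lemma lub_mem_club {C : Set T} (hcl : IsClubIn C) {S : Set T} (hsub : S ⊆ C)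
    (hne : S.Nonempty) (hbd : (upperBounds S).Nonempty) : lub S ∈ C := by
  by_cases hmem : lub S ∈ S
  · exact hsub hmem
  · refine hcl.2 _ ?_ ?_
    · obtain ⟨x, hx⟩ := hne
      exact ⟨x, lt_of_le_of_ne (le_lub hbd hx) (fun h => hmem (h ▸ hx))⟩
    · intro y hy
      have hyub : y ∉ upperBounds S := fun hub => absurd (lub_le hub) (not_le.mpr hy)
      obtain ⟨z, hz, hzy⟩ : ∃ z ∈ S, ¬ z ≤ y := by
        by_contra hcon; push_neg at hcon; exact hyub hcon
      exact ⟨z, hsub hz, not_le.mp hzy,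
        lt_of_le_of_ne (le_lub hbd hz) (fun h => hmem (h ▸ hz))⟩

end Generic

section Card
variable {c : Cardinal.{u}}

lemma exists_strict_bound (hc : c.IsRegular) {S : Set c.ord.ToType} (hS : #S < c) :
    ∃ b, ∀ x ∈ S, x < b := by
  by_contra hcon
  push_neg at hcon
  have h1 := Order.cof_le (s := S) (fun a => by obtain ⟨x, hx, h⟩ := hcon a; exact ⟨x, hx, h⟩)
  rw [Ordinal.cof_toType, hc.cof_ord] at h1
  exact absurd hS (not_lt.mpr h1)

lemma exists_gt' (hc : c.IsRegular) (x : c.ord.ToType) : ∃ y, x < y := by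
  obtain ⟨b, hb⟩ := exists_strict_bound hc (S := {x})
    (by rw [mk_singleton]; exact one_lt_aleph0.trans_le hc.aleph0_le)
  exact ⟨b, hb x rfl⟩

lemma mk_Iic_lt (hc : c.IsRegular) (b : c.ord.ToType) : #(Iic b) < c := by
  obtain ⟨y, hy⟩ := exists_gt' hc b
  refine lt_of_le_of_lt (mk_le_mk_of_subset (fun x hx => ?_)) (mk_Iio_ord_toType y)
  exact lt_of_le_of_lt hx hy

lemma isClubIn_sInter (hc : c.IsRegular) (hω : ℵ₀ < c)
    {S : Set (Set c.ord.ToType)} [Nonempty c.ord.ToType]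
    (hS : #S < c) (hcl : ∀ C ∈ S, IsClubIn C) : IsClubIn (⋂₀ S) := by
  constructor
  · intro x
    rcases eq_empty_or_nonempty S with rfl | hne
    · obtain ⟨y, hy⟩ := exists_gt' hc x
      exact ⟨y, by simp, hy⟩
    · set z : ℕ → c.ord.ToType :=
        fun n => Nat.rec x (fun _ zn => slub (insert zn ((fun C => nxt C zn) '' S))) n with hz
      have hcard : ∀ t : c.ord.ToType,
          #(insert t ((fun C => nxt C t) '' S) : Set c.ord.ToType) < c := by
        intro t
        refine lt_of_le_of_lt mk_insert_le ?_
        exact add_lt_of_lt hc.aleph0_le (lt_of_le_of_lt mk_image_le hS)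
          (one_lt_aleph0.trans hω)
      have hzsucc : ∀ n : ℕ, ∀ u ∈ insert (z n) ((fun C => nxt C (z n)) '' S),
          u < z (n + 1) := by
        intro n u hu
        have := least_mem (S := {b | ∀ x ∈ insert (z n) ((fun C => nxt C (z n)) '' S), x < b})
          (exists_strict_bound hc (hcard (z n)))
        exact this u hu
      have hzmono : ∀ n : ℕ, z n < z (n + 1) := fun n =>
        hzsucc n (z n) (mem_insert _ _)
      have hrange : #(range z) < c := by
        refine lt_of_le_of_lt ?_ hω
        exact mk_le_aleph0_iff.mpr (countable_range z).to_subtype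
      have hbw := exists_strict_bound hc hrange
      set w := slub (range z) with hw
      have hzw : ∀ n, z n < w := fun n => lt_slub hbw ⟨n, rfl⟩
      refine ⟨w, ?_, hzw 0⟩
      rw [mem_sInter]
      intro C hC
      refine (hcl C hC).2 w ⟨z 0, hzw 0⟩ ?_
      intro y hy
      obtain ⟨n, hn⟩ : ∃ n, y ≤ z n := by
        by_contra hcon
        push_neg at hcon
        have hyb : ∀ u ∈ range z, u < y := by
          rintro u ⟨n, rfl⟩; exact hcon n
        exact absurd (slub_le hyb) (not_le.mpr hy)
      have hmem := nxt_spec (hcl C hC).1 (z n)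
      refine ⟨nxt C (z n), hmem.1, lt_of_le_of_lt hn hmem.2, ?_⟩
      have h1 : nxt C (z n) < z (n + 1) :=
        hzsucc n _ (mem_insert_of_mem _ ⟨C, hC, rfl⟩)
      exact h1.trans (hzw (n + 1))
  · intro x hx1 hx2
    rw [mem_sInter]
    intro C hC
    refine (hcl C hC).2 x hx1 (fun y hy => ?_)
    obtain ⟨t, ht, h1, h2⟩ := hx2 y hy
    exact ⟨t, (mem_sInter.mp ht) C hC, h1, h2⟩

end Card

section Main
set_option linter.unusedSectionVars false

variable {κ μ : Cardinal.{u}} {Θ : Type u} [LinearOrder Θ] [WellFoundedLT Θ]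
  [Nonempty κ.ord.ToType] [Nonempty μ.ord.ToType]
  (h : μ.ord.ToType → κ.ord.ToType → κ.ord.ToType)
  (f : κ.ord.ToType → κ.ord.ToType)
  (hdom : ∀ g : κ.ord.ToType → κ.ord.ToType, ∃ i, clubLt g (h i))

noncomputable def lubN (p : Θ → μ.ord.ToType × Set κ.ord.ToType) (ξ : Θ)
    (γ : κ.ord.ToType) : κ.ord.ToType :=
  lub (insert γ ((fun η => nxt (p η).2 γ) '' Iio ξ))

noncomputable def Sset (p : Θ → μ.ord.ToType × Set κ.ord.ToType) (ξ : Θ)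
    (γ : κ.ord.ToType) : Set κ.ord.ToType :=
  (f '' Iic (lubN p ξ γ)) ∪ ((fun η => h (p η).1 γ) '' Iio ξ)

noncomputable def Gdef (p : Θ → μ.ord.ToType × Set κ.ord.ToType) (ξ : Θ) :
    κ.ord.ToType → κ.ord.ToType :=
  fun γ => slub (Sset h f p ξ γ)

noncomputable def stepF (g : κ.ord.ToType → κ.ord.ToType) (I : Set κ.ord.ToType) :
    μ.ord.ToType × Set κ.ord.ToType :=
  ((hdom g).choose, ((hdom g).choose_spec).choose ∩ I)

noncomputable def AC : Θ → μ.ord.ToType × Set κ.ord.ToType :=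
  WellFounded.fix wellFounded_lt fun ξ IH =>
    stepF h hdom
      (Gdef h f (fun η => if hh : η < ξ then IH η hh else Classical.arbitrary _) ξ)
      (⋂ η ∈ Iio ξ, ⋂ (hh : η < ξ), (IH η hh).2)

variable {p q : Θ → μ.ord.ToType × Set κ.ord.ToType} {ξ : Θ}

lemma lubN_congr (hp : ∀ η < ξ, p η = q η) (γ : κ.ord.ToType) :
    lubN p ξ γ = lubN q ξ γ := by
  unfold lubN
  congr 2
  exact image_congr fun η hη => by rw [hp η hη]

lemma Sset_congr (hp : ∀ η < ξ, p η = q η) (γ : κ.ord.ToType) :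
    Sset h f p ξ γ = Sset h f q ξ γ := by
  unfold Sset
  rw [lubN_congr hp]
  congr 1
  exact image_congr fun η hη => by rw [hp η hη]

lemma Gdef_congr (hp : ∀ η < ξ, p η = q η) : Gdef h f p ξ = Gdef h f q ξ :=
  funext fun γ => by unfold Gdef; rw [Sset_congr h f hp]

lemma AC_eq (ξ : Θ) : AC h f hdom ξ =
    stepF h hdom (Gdef h f (AC h f hdom) ξ) (⋂ η ∈ Iio ξ, (AC h f hdom η).2) := by
  have h1 : AC h f hdom ξ = stepF h hdom
      (Gdef h f (fun η => if hh : η < ξ then AC h f hdom η else Classical.arbitrary _) ξ)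
      (⋂ η ∈ Iio ξ, ⋂ (hh : η < ξ), ((fun η (_ : η < ξ) => AC h f hdom η) η hh).2) :=
    WellFounded.fix_eq _ _ _
  rw [h1]
  have hG : Gdef h f (fun η => if hh : η < ξ then AC h f hdom η else Classical.arbitrary _) ξ
      = Gdef h f (AC h f hdom) ξ :=
    Gdef_congr h f (fun η hη => by rw [dif_pos hη])
  have hI : (⋂ η ∈ Iio ξ, ⋂ (hh : η < ξ), ((fun η (_ : η < ξ) => AC h f hdom η) η hh).2)
      = ⋂ η ∈ Iio ξ, (AC h f hdom η).2 := by
    refine Set.iInter₂_congr fun η hη => ?_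
    ext x
    simp only [mem_iInter]
    exact ⟨fun hx => hx hη, fun hx _ => hx⟩
  rw [hG, hI]

noncomputable def alp (ξ : Θ) : μ.ord.ToType := (AC h f hdom ξ).1

noncomputable def Cl (ξ : Θ) : Set κ.ord.ToType := (AC h f hdom ξ).2

noncomputable def gg (ξ : Θ) : κ.ord.ToType → κ.ord.ToType := Gdef h f (AC h f hdom) ξ

lemma alp_eq (ξ : Θ) : alp h f hdom ξ = (hdom (gg h f hdom ξ)).choose := by
  unfold alp gg
  rw [AC_eq h f hdom ξ]
  rfl

lemma Cl_eq (ξ : Θ) : Cl h f hdom ξ =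
    ((hdom (gg h f hdom ξ)).choose_spec).choose ∩ ⋂ η ∈ Iio ξ, Cl h f hdom η := by
  unfold Cl gg
  rw [AC_eq h f hdom ξ]
  rfl

lemma Cl_subset {η ξ : Θ} (hη : η < ξ) : Cl h f hdom ξ ⊆ Cl h f hdom η := by
  rw [Cl_eq]
  intro x hx
  exact mem_iInter₂.mp hx.2 η hη

lemma gg_lt_h (ξ : Θ) {γ : κ.ord.ToType} (hγ : γ ∈ Cl h f hdom ξ) :
    gg h f hdom ξ γ < h (alp h f hdom ξ) γ := by
  have hs := ((hdom (gg h f hdom ξ)).choose_spec).choose_spec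
  rw [alp_eq]
  refine hs.2 γ ?_
  rw [Cl_eq] at hγ
  exact hγ.1

lemma Sset_small (hκ : κ.IsRegular) (hsm : #(Iio ξ) < κ) (γ : κ.ord.ToType) :
    #(Sset h f (AC h f hdom) ξ γ) < κ := by
  refine lt_of_le_of_lt (mk_union_le _ _) (add_lt_of_lt hκ.aleph0_le ?_ ?_)
  · exact lt_of_le_of_lt mk_image_le (mk_Iic_lt hκ _)
  · exact lt_of_le_of_lt mk_image_le hsm

lemma lt_gg (hκ : κ.IsRegular) (hsm : #(Iio ξ) < κ) {x γ : κ.ord.ToType}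
    (hx : x ∈ Sset h f (AC h f hdom) ξ γ) : x < gg h f hdom ξ γ := by
  have := least_mem (S := {b | ∀ x ∈ Sset h f (AC h f hdom) ξ γ, x < b})
    (exists_strict_bound hκ (Sset_small h f hdom hκ hsm γ))
  exact this x hx

lemma h_lt_gg (hκ : κ.IsRegular) (hsm : #(Iio ξ) < κ) {η : Θ} (hη : η < ξ)
    (γ : κ.ord.ToType) : h (alp h f hdom η) γ < gg h f hdom ξ γ :=
  lt_gg h f hdom hκ hsm (Or.inr ⟨η, hη, rfl⟩)

lemma f_lt_gg (hκ : κ.IsRegular) (hsm : #(Iio ξ) < κ) {β γ : κ.ord.ToType}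
    (hβ : β ≤ lubN (AC h f hdom) ξ γ) : f β < gg h f hdom ξ γ :=
  lt_gg h f hdom hκ hsm (Or.inl ⟨β, hβ, rfl⟩)

lemma nxt_le_lubN (hκ : κ.IsRegular) (hsm : #(Iio ξ) < κ) {η : Θ} (hη : η < ξ)
    (γ : κ.ord.ToType) : nxt (Cl h f hdom η) γ ≤ lubN (AC h f hdom) ξ γ := by
  have hcard : #(insert γ ((fun η => nxt ((AC h f hdom η).2) γ) '' Iio ξ)
      : Set κ.ord.ToType) < κ := by
    refine lt_of_le_of_lt mk_insert_le (add_lt_of_lt hκ.aleph0_le ?_ ?_)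
    · exact lt_of_le_of_lt mk_image_le hsm
    · exact one_lt_aleph0.trans_le hκ.aleph0_le
  obtain ⟨b, hb⟩ := exists_strict_bound hκ hcard
  exact le_lub ⟨b, fun x hx => (hb x hx).le⟩ (mem_insert_of_mem _ ⟨η, hη, rfl⟩)

lemma Cl_club (hκ : κ.IsRegular) (hω : ℵ₀ < κ) (hsm : ∀ ξ : Θ, #(Iio ξ) < κ) (ξ : Θ) :
    IsClubIn (Cl h f hdom ξ) := by
  refine (IsWellFounded.wf (r := ((· < ·) : Θ → Θ → Prop))).induction
    (C := fun ξ => IsClubIn (Cl h f hdom ξ)) ξ ?_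
  intro ξ IH
  rw [Cl_eq]
  have heq : ((hdom (gg h f hdom ξ)).choose_spec).choose ∩ ⋂ η ∈ Iio ξ, Cl h f hdom η
      = ⋂₀ (insert ((hdom (gg h f hdom ξ)).choose_spec).choose
          ((fun η => Cl h f hdom η) '' Iio ξ)) := by
    rw [sInter_insert, sInter_image]
  rw [heq]
  refine isClubIn_sInter hκ hω ?_ ?_
  · refine lt_of_le_of_lt mk_insert_le (add_lt_of_lt hκ.aleph0_le ?_ ?_)
    · exact lt_of_le_of_lt mk_image_le (hsm ξ)
    · exact one_lt_aleph0.trans hω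
  · rintro C hC
    rcases hC with rfl | ⟨η, hη, rfl⟩
    · exact ((hdom (gg h f hdom ξ)).choose_spec).choose_spec.1
    · exact IH η hη

lemma alp_inj (hκ : κ.IsRegular) (hω : ℵ₀ < κ) (hsm : ∀ ξ : Θ, #(Iio ξ) < κ) :
    Function.Injective (alp (Θ := Θ) h f hdom) := by
  have key : ∀ {η ξ : Θ}, η < ξ → alp h f hdom η ≠ alp h f hdom ξ := by
    intro η ξ hη heq
    obtain ⟨γ, hγ, -⟩ := (Cl_club h f hdom hκ hω hsm ξ).1 (Classical.arbitrary _)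
    have h1 := h_lt_gg h f hdom hκ (hsm ξ) hη γ
    have h2 := gg_lt_h h f hdom ξ hγ
    rw [heq] at h1
    exact absurd (h1.trans h2) (lt_irrefl _)
  intro η ξ heq
  rcases lt_trichotomy η ξ with hlt | hEq | hgt
  · exact absurd heq (key hlt)
  · exact hEq
  · exact absurd heq.symm (key hgt)

end Main
end ClubAux

/-- If `P ⊆ [μ]^θ` has size `μ` and meets every set in `[μ]^θ` in a set of size `θ`, and
there is a `<_cl`-dominating family of increasing functions indexed by `μ`, then there is a
`<*`-dominating family of size at most `μ`; that is, `d(λ) ≤ μ`. -/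
theorem dFun_le_of_club_dominating (κ : Cardinal) (hκ : κ.IsRegular) (huncount : ℵ₀ < κ)
    (θ : Cardinal) (hθ : θ.IsRegular) (hθκ : θ < κ) (μ : Cardinal)
    (P : Set (Set μ.ord.ToType)) (hPθ : ∀ A ∈ P, #A = θ) (hPcard : #P = μ)
    (hPcover : ∀ A : Set μ.ord.ToType, #A = θ → ∃ C ∈ P, #(↥(A ∩ C)) = θ)
    (h : μ.ord.ToType → (κ.ord.ToType → κ.ord.ToType))
    (hmono : ∀ i, Monotone (h i))
    (hdom : ∀ f : κ.ord.ToType → κ.ord.ToType, ∃ i, clubLt f (h i)) :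
    ∃ D : Set (κ.ord.ToType → κ.ord.ToType),
      (∀ f : κ.ord.ToType → κ.ord.ToType, ∃ g ∈ D, almostLt f g) ∧ #D ≤ μ := by
  classical
  have hord_ne : ∀ c : Cardinal, c ≠ 0 → Nonempty c.ord.ToType := by
    intro c hc
    refine toType_nonempty_iff_ne_zero.mpr (fun h0 => hc ?_)
    have := congrArg Ordinal.card h0
    rwa [card_ord, Ordinal.card_zero] at this
  haveI hTne : Nonempty κ.ord.ToType := hord_ne κ hκ.pos.ne'
  haveI hΘne : Nonempty θ.ord.ToType := hord_ne θ hθ.pos.ne'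
  obtain ⟨i0, -⟩ := hdom (fun x => x)
  haveI hMne : Nonempty μ.ord.ToType := ⟨i0⟩
  refine ⟨(fun (C : Set μ.ord.ToType) => fun β => ClubAux.lub ((fun a => h a β) '' C)) '' P,
    ?_, le_trans mk_image_le (le_of_eq hPcard)⟩
  intro f
  have hsm : ∀ ξ : θ.ord.ToType, #(Iio ξ) < κ := fun ξ => (mk_Iio_ord_toType ξ).trans hθκ
  set al := ClubAux.alp (Θ := θ.ord.ToType) h f hdom with hal
  set CC := ClubAux.Cl (Θ := θ.ord.ToType) h f hdom with hCC
  have hclub : ∀ ξ, IsClubIn (CC ξ) := ClubAux.Cl_club h f hdom hκ huncount hsm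
  have hinj : Function.Injective al := ClubAux.alp_inj h f hdom hκ huncount hsm
  have hA : #(range al) = θ := by rw [mk_range_eq _ hinj, mk_ord_toType]
  obtain ⟨C, hCP, hACθ⟩ := hPcover (range al) hA
  -- the ξ with al ξ ∈ C are cofinal in θ.ord.ToType
  have hE : ∀ ξ₀ : θ.ord.ToType, ∃ ξ, ξ₀ < ξ ∧ al ξ ∈ C := by
    by_contra hcon
    push_neg at hcon
    obtain ⟨ξ₀, hξ₀⟩ := hcon
    have hsub : (range al ∩ C : Set μ.ord.ToType) ⊆ al '' (Iic ξ₀) := by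
      rintro a ⟨⟨ξ, rfl⟩, haC⟩
      refine ⟨ξ, ?_, rfl⟩
      by_contra hlt
      exact hξ₀ ξ (not_le.mp hlt) haC
    have h1 : θ ≤ #(al '' (Iic ξ₀)) :=
      le_trans (le_of_eq hACθ.symm) (mk_le_mk_of_subset hsub)
    have h2 : #(al '' (Iic ξ₀)) < θ :=
      lt_of_le_of_lt mk_image_le (ClubAux.mk_Iic_lt hθ ξ₀)
    exact absurd (h1.trans_lt h2) (lt_irrefl θ)
  set D' := ⋂ ξ : θ.ord.ToType, CC ξ with hD'
  have hD'club : IsClubIn D' := by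
    have heq : D' = ⋂₀ (range CC) := (sInter_range CC).symm
    rw [heq]
    refine ClubAux.isClubIn_sInter hκ huncount ?_ ?_
    · exact lt_of_le_of_lt (le_trans mk_range_le (le_of_eq (mk_ord_toType θ))) hθκ
    · rintro _ ⟨ξ, rfl⟩; exact hclub ξ
  obtain ⟨γ₀, hγ₀, -⟩ := hD'club.1 (Classical.arbitrary _)
  refine ⟨_, ⟨C, hCP, rfl⟩, γ₀, ?_⟩
  intro β hβ
  have hβub : β ∈ upperBounds (D' ∩ Iic β) := fun x hx => hx.2
  have hS1ne : (D' ∩ Iic β).Nonempty := ⟨γ₀, hγ₀, le_of_lt hβ⟩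
  set δ := ClubAux.lub (D' ∩ Iic β) with hδ
  have hδD' : δ ∈ D' := ClubAux.lub_mem_club hD'club inter_subset_left hS1ne ⟨β, hβub⟩
  have hδβ : δ ≤ β := ClubAux.lub_le hβub
  set R := range (fun ξ : θ.ord.ToType => ClubAux.nxt (CC ξ) δ) with hR
  have hRsm : #R < κ :=
    lt_of_le_of_lt (le_trans mk_range_le (le_of_eq (mk_ord_toType θ))) hθκ
  obtain ⟨bR, hbR⟩ := ClubAux.exists_strict_bound hκ hRsm
  have hRub : (upperBounds R).Nonempty := ⟨bR, fun x hx => (hbR x hx).le⟩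
  set s := ClubAux.lub R with hs
  have hnxtmem : ∀ ξ, ClubAux.nxt (CC ξ) δ ∈ CC ξ ∧ δ < ClubAux.nxt (CC ξ) δ :=
    fun ξ => ClubAux.nxt_spec (hclub ξ).1 δ
  have hCCmono : ∀ {η ξ : θ.ord.ToType}, η ≤ ξ → CC ξ ⊆ CC η := by
    intro η ξ hle
    rcases eq_or_lt_of_le hle with rfl | hlt
    · exact subset_rfl
    · exact ClubAux.Cl_subset h f hdom hlt
  have hsD' : s ∈ D' := by
    rw [hD', mem_iInter]
    intro η
    set Rη := (fun ξ : θ.ord.ToType => ClubAux.nxt (CC ξ) δ) '' Ici η with hRη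
    have hRηsub : Rη ⊆ CC η := by
      rintro _ ⟨ξ, hξ, rfl⟩
      exact hCCmono hξ (hnxtmem ξ).1
    have hRηR : Rη ⊆ R := by rintro _ ⟨ξ, -, rfl⟩; exact ⟨ξ, rfl⟩
    have hRηub : (upperBounds Rη).Nonempty := ⟨bR, fun x hx => (hbR x (hRηR hx)).le⟩
    have heq : ClubAux.lub Rη = s := by
      apply le_antisymm
      · exact ClubAux.lub_le (fun x hx => ClubAux.le_lub hRub (hRηR hx))
      · refine ClubAux.lub_le ?_
        rintro x ⟨ξ, rfl⟩
        have h1 : ClubAux.nxt (CC ξ) δ ≤ ClubAux.nxt (CC (max ξ η)) δ :=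
          ClubAux.nxt_le (hCCmono (le_max_left ξ η) (hnxtmem (max ξ η)).1)
            (hnxtmem (max ξ η)).2
        exact h1.trans (ClubAux.le_lub hRηub ⟨max ξ η, le_max_right ξ η, rfl⟩)
    rw [← heq]
    exact ClubAux.lub_mem_club (hclub η) hRηsub ⟨_, ⟨η, le_refl η, rfl⟩⟩ hRηub
  have hδs : δ < s :=
    lt_of_lt_of_le (hnxtmem (Classical.arbitrary _)).2 (ClubAux.le_lub hRub ⟨_, rfl⟩)
  have hβs : β < s := by
    by_contra hle
    have hmem : s ∈ D' ∩ Iic β := ⟨hsD', not_lt.mp hle⟩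
    exact absurd (ClubAux.le_lub ⟨β, hβub⟩ hmem) (not_le.mpr hδs)
  obtain ⟨ξ₀, hξ₀⟩ : ∃ ξ₀, β < ClubAux.nxt (CC ξ₀) δ := by
    by_contra hcon
    push_neg at hcon
    have hub : β ∈ upperBounds R := by rintro x ⟨ξ, rfl⟩; exact hcon ξ
    exact absurd (ClubAux.lub_le hub) (not_le.mpr hβs)
  obtain ⟨ξ, hξ₀ξ, hξC⟩ := hE ξ₀
  have hstep1 : f β < ClubAux.gg h f hdom ξ δ := by
    refine ClubAux.f_lt_gg h f hdom hκ (hsm ξ) ?_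
    exact le_trans hξ₀.le (ClubAux.nxt_le_lubN h f hdom hκ (hsm ξ) hξ₀ξ δ)
  have hδCCξ : δ ∈ CC ξ := mem_iInter.mp hδD' ξ
  have hstep2 : ClubAux.gg h f hdom ξ δ < h (al ξ) δ := ClubAux.gg_lt_h h f hdom ξ hδCCξ
  have hstep3 : h (al ξ) δ ≤ h (al ξ) β := hmono (al ξ) hδβ
  have hstep4 : h (al ξ) β ≤ ClubAux.lub ((fun a => h a β) '' C) := by
    have hsm2 : #((fun a => h a β) '' C) < κ :=
      lt_of_le_of_lt (le_trans mk_image_le (le_of_eq (hPθ C hCP))) hθκ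
    obtain ⟨b, hb⟩ := ClubAux.exists_strict_bound hκ hsm2
    exact ClubAux.le_lub ⟨b, fun x hx => (hb x hx).le⟩ ⟨al ξ, hξC, rfl⟩
  exact lt_of_lt_of_le (lt_of_lt_of_le (hstep1.trans hstep2) hstep3) hstep4
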